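/- arXiv:2411.12998 — 4 statements merged into one kernel-verified Lean document; each statement's English description precedes it below -/
import Mathlib

section
/- For a positive integer n, there exists a partition of {1,…,2n} into n pairs {(aᵢ,bᵢ) : i = 1,…,n} with aᵢ < bᵢ and bᵢ − aᵢ = i for each i, if and only if n ≡ 0 or 1 (mod 4). -/
private lemma skolem_gauss (k : ℕ) : 2 * (∑ i ∈ Finset.Icc 1 k, i) = k * (k + 1) := by
  induction k with
  | zero => simp
  | succ k ih =>
    rw [Finset.sum_Icc_succ_top (by omega)]
    ring_nf
    ring_nf at ih
    omega

private lemma skolem_builder (n : ℕ) (a : ℕ → ℕ)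
    (hbound : ∀ i ∈ Finset.Icc 1 n, 1 ≤ a i ∧ a i + i ≤ 2 * n)
    (hinj : ∀ i ∈ Finset.Icc 1 n, ∀ j ∈ Finset.Icc 1 n, i ≠ j →
      a i ≠ a j ∧ a i ≠ a j + j ∧ a i + i ≠ a j ∧ a i + i ≠ a j + j) :
    (∃ a b : ℕ → ℕ, (∀ i ∈ Finset.Icc 1 n, a i < b i ∧ b i - a i = i) ∧
      (Finset.Icc 1 n).biUnion (fun i => {a i, b i}) = Finset.Icc 1 (2 * n) ∧
      (∀ i ∈ Finset.Icc 1 n, ∀ j ∈ Finset.Icc 1 n, i ≠ j →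
        Disjoint ({a i, b i} : Finset ℕ) {a j, b j})) := by
  have hdisj : ∀ i ∈ Finset.Icc 1 n, ∀ j ∈ Finset.Icc 1 n, i ≠ j →
      Disjoint ({a i, a i + i} : Finset ℕ) {a j, a j + j} := by
    intro i hi j hj hij
    obtain ⟨h1, h2, h3, h4⟩ := hinj i hi j hj hij
    rw [Finset.disjoint_left]
    intro x hx hx'
    simp only [Finset.mem_insert, Finset.mem_singleton] at hx hx'
    rcases hx with rfl | rfl <;> rcases hx' with h | h <;> omega
  refine ⟨a, fun i => a i + i, ?_, ?_, hdisj⟩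
  · intro i hi
    have h1 := hbound i hi
    have h2 : 1 ≤ i := (Finset.mem_Icc.mp hi).1
    show a i < a i + i ∧ a i + i - a i = i
    omega
  · apply Finset.eq_of_subset_of_card_le
    · intro x hx
      simp only [Finset.mem_biUnion, Finset.mem_insert, Finset.mem_singleton] at hx
      obtain ⟨i, hi, hx⟩ := hx
      have h1 := hbound i hi
      have h2 : 1 ≤ i := (Finset.mem_Icc.mp hi).1
      rw [Finset.mem_Icc]
      rcases hx with rfl | rfl <;> omega
    · rw [Finset.card_biUnion hdisj]
      have hc : ∀ i ∈ Finset.Icc 1 n, ({a i, a i + i} : Finset ℕ).card = 2 := by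
        intro i hi
        have h2 : 1 ≤ i := (Finset.mem_Icc.mp hi).1
        rw [Finset.card_insert_of_notMem (by simp; omega), Finset.card_singleton]
      rw [Finset.sum_congr rfl hc, Finset.sum_const, Nat.card_Icc, Nat.card_Icc]
      simp [Nat.mul_comm]

private lemma skolem_necessary (n : ℕ) (a b : ℕ → ℕ)
    (hab : ∀ i ∈ Finset.Icc 1 n, a i < b i ∧ b i - a i = i)
    (hU : (Finset.Icc 1 n).biUnion (fun i => {a i, b i}) = Finset.Icc 1 (2 * n))
    (hD : ∀ i ∈ Finset.Icc 1 n, ∀ j ∈ Finset.Icc 1 n, i ≠ j →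
      Disjoint ({a i, b i} : Finset ℕ) {a j, b j}) :
    n % 4 = 0 ∨ n % 4 = 1 := by
  have hsum : ∑ x ∈ Finset.Icc 1 (2 * n), x
      = ∑ i ∈ Finset.Icc 1 n, (a i + b i) := by
    rw [← hU]
    rw [Finset.sum_biUnion]
    · apply Finset.sum_congr rfl
      intro i hi
      have h := hab i hi
      rw [Finset.sum_pair (by omega)]
    · intro i hi j hj hij
      exact hD i hi j hj hij
  have hsum2 : ∑ i ∈ Finset.Icc 1 n, (a i + b i)
      = 2 * (∑ i ∈ Finset.Icc 1 n, a i) + ∑ i ∈ Finset.Icc 1 n, i := by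
    rw [Finset.mul_sum, ← Finset.sum_add_distrib]
    apply Finset.sum_congr rfl
    intro i hi
    have h := hab i hi
    omega
  set S := ∑ i ∈ Finset.Icc 1 n, a i with hS
  have g1 := skolem_gauss n
  have g2 := skolem_gauss (2 * n)
  have key : 4 * S + n * (n + 1) = 2 * n * (2 * n + 1) := by
    have := hsum
    rw [hsum2] at this
    omega
  -- 4 * S = 3*n*n + n
  have key2 : 4 * S = 3 * (n * n) + n := by nlinarith [key]
  have e1 : (3 * (n * n) + n) % 4 = ((3 * (n * n)) % 4 + n % 4) % 4 := Nat.add_mod _ _ _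
  have e2 : (3 * (n * n)) % 4 = (3 % 4 * (n * n % 4)) % 4 := Nat.mul_mod _ _ _
  have e3 : n * n % 4 = (n % 4) * (n % 4) % 4 := Nat.mul_mod _ _ _
  have hr : n % 4 < 4 := Nat.mod_lt _ (by norm_num)
  interval_cases h : n % 4 <;> omega

set_option maxHeartbeats 2000000 in
theorem stmt_4 (n : ℕ) (hn : 1 ≤ n) :
    (∃ a b : ℕ → ℕ, (∀ i ∈ Finset.Icc 1 n, a i < b i ∧ b i - a i = i) ∧
      (Finset.Icc 1 n).biUnion (fun i => {a i, b i}) = Finset.Icc 1 (2 * n) ∧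
      (∀ i ∈ Finset.Icc 1 n, ∀ j ∈ Finset.Icc 1 n, i ≠ j →
        Disjoint ({a i, b i} : Finset ℕ) {a j, b j}))
    ↔ (n % 4 = 0 ∨ n % 4 = 1) := by
  constructor
  · rintro ⟨a, b, hab, hU, hD⟩
    exact skolem_necessary n a b hab hU hD
  · intro hmod
    rcases hmod with h0 | h1
    · -- n = 4m, m ≥ 1
      obtain ⟨m, rfl⟩ : ∃ m, n = 4 * m := ⟨n / 4, by omega⟩
      have hm : 1 ≤ m := by omega
      apply skolem_builder (4 * m)
        (fun d => if d % 2 = 0 then 2 * m + 1 - d / 2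
          else if d = 4 * m - 1 then 2 * m + 1
          else if d = 2 * m + 1 then 6 * m - 1
          else if d = 1 then 7 * m
          else if 2 * m + 1 < d then (12 * m + 1 - d) / 2
          else (12 * m - 1 - d) / 2)
      · intro i hi
        rw [Finset.mem_Icc] at hi
        split_ifs <;> omega
      · intro i hi j hj hij
        rw [Finset.mem_Icc] at hi hj
        split_ifs <;> omega
    · -- n = 4m+1
      rcases eq_or_ne n 1 with rfl | hn1
      · apply skolem_builder 1 (fun _ => 1)
        · intro i hi; rw [Finset.mem_Icc] at hi; omega
        · intro i hi j hj hij; rw [Finset.mem_Icc] at hi hj; omega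
      · rcases eq_or_ne n 5 with rfl | hn5
        · apply skolem_builder 5
            (fun d => if d = 1 then 9 else if d = 2 then 2 else if d = 3 then 5
              else if d = 4 then 3 else 1)
          · intro i hi
            rw [Finset.mem_Icc] at hi
            split_ifs <;> omega
          · intro i hi j hj hij
            rw [Finset.mem_Icc] at hi hj
            split_ifs <;> omega
        · obtain ⟨m, rfl⟩ : ∃ m, n = 4 * m + 1 := ⟨n / 4, by omega⟩
          have hm : 2 ≤ m := by omega
          apply skolem_builder (4 * m + 1)
            (fun d => if d % 2 = 0 then 2 * m + 1 - d / 2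
              else if d = 4 * m + 1 then 2 * m + 1
              else if d = 2 * m - 1 then 6 * m + 3
              else if d = 1 then 5 * m + 2
              else if 2 * m - 1 < d then (12 * m + 3 - d) / 2
              else (12 * m + 5 - d) / 2)
          · intro i hi
            rw [Finset.mem_Icc] at hi
            split_ifs <;> omega
          · intro i hi j hj hij
            rw [Finset.mem_Icc] at hi hj
            split_ifs <;> omega
end

section
/- For a positive integer n, there exists a partition of {1,…,2n−1} ∪ {2n+1} into n pairs {(aᵢ,bᵢ) : i = 1,…,n} with aᵢ < bᵢ and bᵢ − aᵢ = i for each i, if and only if n ≡ 2 or 3 (mod 4). -/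
set_option maxHeartbeats 1000000

/-- positions for a hooked Skolem sequence of order 2 -/
def skA1 (i : ℕ) : ℕ := if i = 1 then 1 else 3

/-- positions for a hooked Skolem sequence of order 3 -/
def skA0 (i : ℕ) : ℕ := if i = 1 then 2 else if i = 2 then 5 else 1

/-- positions for a hooked Skolem sequence of order 4m+2, m ≥ 1 -/
def skA2 (m i : ℕ) : ℕ :=
  if i % 2 = 1 then
    if i = 1 then m + 1
    else if i = 4*m+1 then 2*m+3
    else 4*m+4 + (4*m - 1 - i)/2
  else
    if i = 2*m+2 then 6*m+3
    else if 2*m+4 ≤ i then 2*m+2 - i/2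
    else m+3 + (2*m - i)/2

/-- positions for a hooked Skolem sequence of order 4m+3, m ≥ 1 -/
def skA3 (m i : ℕ) : ℕ :=
  if i % 2 = 0 then 2*m+2 - i/2
  else if i = 4*m+3 then 2*m+2
  else if 2*m+3 ≤ i then 4*m+4 + (4*m+1 - i)/2
  else if i = 2*m+1 then 6*m+6
  else if i = 1 then 5*m+4
  else 5*m+6 + (2*m-1-i)/2


lemma skA2_char (m i : ℕ) (h1 : 1 ≤ i) (h2 : i ≤ 4*m+2) :
    (i % 2 = 1 ∧ i = 1 ∧ skA2 m i = m + 1) ∨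
    (i % 2 = 1 ∧ i = 4*m+1 ∧ 2 ≤ i ∧ skA2 m i = 2*m+3) ∨
    (i % 2 = 1 ∧ 3 ≤ i ∧ i ≤ 4*m-1 ∧ skA2 m i = 4*m+4 + (4*m - 1 - i)/2) ∨
    (i % 2 = 0 ∧ i = 2*m+2 ∧ skA2 m i = 6*m+3) ∨
    (i % 2 = 0 ∧ 2*m+4 ≤ i ∧ skA2 m i = 2*m+2 - i/2) ∨
    (i % 2 = 0 ∧ i ≤ 2*m ∧ skA2 m i = m+3 + (2*m - i)/2) := by
  simp only [skA2]
  split_ifs with h3 h4 h5 h6 h7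
  · exact Or.inl ⟨h3, h4, rfl⟩
  · exact Or.inr (Or.inl ⟨h3, h5, by omega, rfl⟩)
  · exact Or.inr (Or.inr (Or.inl ⟨h3, by omega, by omega, rfl⟩))
  · exact Or.inr (Or.inr (Or.inr (Or.inl ⟨by omega, h6, rfl⟩)))
  · exact Or.inr (Or.inr (Or.inr (Or.inr (Or.inl ⟨by omega, h7, rfl⟩))))
  · exact Or.inr (Or.inr (Or.inr (Or.inr (Or.inr ⟨by omega, by omega, rfl⟩))))

lemma skA3_char (m i : ℕ) (h1 : 1 ≤ i) (h2 : i ≤ 4*m+3) :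
    (i % 2 = 0 ∧ skA3 m i = 2*m+2 - i/2) ∨
    (i % 2 = 1 ∧ i = 4*m+3 ∧ skA3 m i = 2*m+2) ∨
    (i % 2 = 1 ∧ 2*m+3 ≤ i ∧ i ≤ 4*m+1 ∧ skA3 m i = 4*m+4 + (4*m+1 - i)/2) ∨
    (i % 2 = 1 ∧ i = 2*m+1 ∧ skA3 m i = 6*m+6) ∨
    (i % 2 = 1 ∧ i = 1 ∧ skA3 m i = 5*m+4) ∨
    (i % 2 = 1 ∧ 3 ≤ i ∧ i ≤ 2*m-1 ∧ skA3 m i = 5*m+6 + (2*m-1-i)/2) := by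
  simp only [skA3]
  split_ifs with h3 h4 h5 h6 h7
  · exact Or.inl ⟨h3, rfl⟩
  · exact Or.inr (Or.inl ⟨by omega, h4, rfl⟩)
  · exact Or.inr (Or.inr (Or.inl ⟨by omega, h5, by omega, rfl⟩))
  · exact Or.inr (Or.inr (Or.inr (Or.inl ⟨by omega, h6, rfl⟩)))
  · exact Or.inr (Or.inr (Or.inr (Or.inr (Or.inl ⟨by omega, h7, rfl⟩))))
  · exact Or.inr (Or.inr (Or.inr (Or.inr (Or.inr ⟨by omega, by omega, by omega, rfl⟩))))

lemma sk_build (n : ℕ) (hn : 1 ≤ n) (A : ℕ → ℕ)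
    (hb : ∀ i ∈ Finset.Icc 1 n, 1 ≤ A i ∧ A i + i ≤ 2*n+1 ∧ A i ≠ 2*n ∧ A i + i ≠ 2*n)
    (hinj : ∀ i ∈ Finset.Icc 1 n, ∀ j ∈ Finset.Icc 1 n, i ≠ j →
      A i ≠ A j ∧ A i ≠ A j + j ∧ A i + i ≠ A j ∧ A i + i ≠ A j + j) :
    (∀ i ∈ Finset.Icc 1 n, A i < A i + i ∧ (A i + i) - A i = i) ∧
    (Finset.Icc 1 n).biUnion (fun i => {A i, A i + i}) =
      Finset.Icc 1 (2 * n - 1) ∪ {2 * n + 1} ∧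
    (∀ i ∈ Finset.Icc 1 n, ∀ j ∈ Finset.Icc 1 n, i ≠ j →
      Disjoint ({A i, A i + i} : Finset ℕ) {A j, A j + j}) := by
  have hdis : ∀ i ∈ Finset.Icc 1 n, ∀ j ∈ Finset.Icc 1 n, i ≠ j →
      Disjoint ({A i, A i + i} : Finset ℕ) {A j, A j + j} := by
    intro i hi j hj hij
    obtain ⟨h1, h2, h3, h4⟩ := hinj i hi j hj hij
    rw [Finset.disjoint_left]
    intro x hx hx'
    simp only [Finset.mem_insert, Finset.mem_singleton] at hx hx'
    omega
  refine ⟨?_, ?_, hdis⟩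
  · intro i hi
    rw [Finset.mem_Icc] at hi
    omega
  · apply Finset.eq_of_subset_of_card_le
    · intro x hx
      simp only [Finset.mem_biUnion] at hx
      obtain ⟨i, hi, hx⟩ := hx
      have hbi := hb i hi
      rw [Finset.mem_Icc] at hi
      simp only [Finset.mem_insert, Finset.mem_singleton] at hx
      simp only [Finset.mem_union, Finset.mem_Icc, Finset.mem_singleton]
      omega
    · have hT : (Finset.Icc 1 (2*n-1) ∪ ({2*n+1} : Finset ℕ)).card = 2*n := by
        rw [Finset.card_union_of_disjoint]
        · rw [Nat.card_Icc, Finset.card_singleton]; omega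
        · simp only [Finset.disjoint_singleton_right, Finset.mem_Icc]; omega
      have hS : ((Finset.Icc 1 n).biUnion (fun i => ({A i, A i + i} : Finset ℕ))).card
          = 2*n := by
        rw [Finset.card_biUnion hdis]
        have : ∀ i ∈ Finset.Icc 1 n, ({A i, A i + i} : Finset ℕ).card = 2 := by
          intro i hi
          rw [Finset.mem_Icc] at hi
          exact Finset.card_pair (by omega)
        rw [Finset.sum_congr rfl this, Finset.sum_const, Nat.card_Icc, smul_eq_mul]
        omega
      omega

theorem stmt_5 (n : ℕ) (hn : 1 ≤ n) :
    (∃ a b : ℕ → ℕ, (∀ i ∈ Finset.Icc 1 n, a i < b i ∧ b i - a i = i) ∧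
      (Finset.Icc 1 n).biUnion (fun i => {a i, b i}) =
        Finset.Icc 1 (2 * n - 1) ∪ {2 * n + 1} ∧
      (∀ i ∈ Finset.Icc 1 n, ∀ j ∈ Finset.Icc 1 n, i ≠ j →
        Disjoint ({a i, b i} : Finset ℕ) {a j, b j}))
    ↔ (n % 4 = 2 ∨ n % 4 = 3) := by
  constructor
  · rintro ⟨a, b, hab, hcov, hdisj⟩
    obtain ⟨n', rfl⟩ : ∃ n', n = n' + 1 := ⟨n - 1, by omega⟩
    rw [show 2 * (n' + 1) - 1 = 2 * n' + 1 from by omega] at hcov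
    have hane : ∀ i ∈ Finset.Icc 1 (n'+1), a i ≠ b i := fun i hi => (hab i hi).1.ne
    have hbi : ∀ i ∈ Finset.Icc 1 (n'+1), b i = a i + i := by
      intro i hi; have := hab i hi; omega
    have hpd : (↑(Finset.Icc 1 (n'+1)) : Set ℕ).PairwiseDisjoint
        (fun i => ({a i, b i} : Finset ℕ)) := by
      intro i hi j hj hij
      exact hdisj i (by simpa using hi) j (by simpa using hj) hij
    have hsum : ∑ x ∈ (Finset.Icc 1 (n'+1)).biUnion (fun i => {a i, b i}), x
        = ∑ i ∈ Finset.Icc 1 (n'+1), (a i + b i) := by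
      rw [Finset.sum_biUnion hpd]
      exact Finset.sum_congr rfl (fun i hi => Finset.sum_pair (hane i hi))
    rw [hcov] at hsum
    have hdisj2 : Disjoint (Finset.Icc 1 (2*n'+1)) ({2*(n'+1)+1} : Finset ℕ) := by
      simp only [Finset.disjoint_singleton_right, Finset.mem_Icc]; omega
    rw [Finset.sum_union hdisj2, Finset.sum_singleton] at hsum
    have hsum2 : ∑ i ∈ Finset.Icc 1 (n'+1), (a i + b i)
        = 2 * (∑ i ∈ Finset.Icc 1 (n'+1), a i) + ∑ i ∈ Finset.Icc 1 (n'+1), i := by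
      rw [Finset.mul_sum, ← Finset.sum_add_distrib]
      exact Finset.sum_congr rfl (fun i hi => by have := hbi i hi; omega)
    have gauss : ∀ N : ℕ, (∑ i ∈ Finset.Icc 1 N, i) * 2 = N * (N+1) := by
      intro N
      have h0 : Finset.range (N+1) = insert 0 (Finset.Icc 1 N) := by
        ext x
        simp only [Finset.mem_range, Finset.mem_insert, Finset.mem_Icc]
        omega
      have h1 := Finset.sum_range_id_mul_two (N+1)
      rw [h0, Finset.sum_insert (by simp), zero_add, Nat.add_sub_cancel] at h1
      rw [h1, Nat.mul_comm]
    have g1 := gauss (2*n'+1)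
    have g2 := gauss (n'+1)
    set A := ∑ i ∈ Finset.Icc 1 (n'+1), a i with hA
    set S := ∑ x ∈ Finset.Icc 1 (2*n'+1), x with hS
    set T := ∑ i ∈ Finset.Icc 1 (n'+1), i with hT
    rw [hsum2] at hsum
    have key : 4 * A = 3 * (n'+1) * (n'+1) + (n'+1) + 2 := by nlinarith [hsum, g1, g2]
    rcases (show n' % 4 = 0 ∨ n' % 4 = 1 ∨ n' % 4 = 2 ∨ n' % 4 = 3 from by omega)
      with h | h | h | h
    · obtain ⟨q, rfl⟩ : ∃ q, n' = 4*q := ⟨n'/4, by omega⟩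
      have h2 : 4*A = 48*(q*q) + 28*q + 6 := by rw [key]; ring
      omega
    · omega
    · omega
    · obtain ⟨q, rfl⟩ : ∃ q, n' = 4*q+3 := ⟨n'/4, by omega⟩
      have h2 : 4*A = 48*(q*q) + 100*q + 54 := by rw [key]; ring
      omega
  · intro h
    by_cases hn2 : n = 2
    · subst hn2
      refine ⟨skA1, fun i => skA1 i + i, sk_build 2 (by norm_num) skA1 ?_ ?_⟩
      · intro i hi
        rw [Finset.mem_Icc] at hi
        simp only [skA1]
        split_ifs <;> omega
      · intro i hi j hj hij
        rw [Finset.mem_Icc] at hi hj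
        simp only [skA1]
        split_ifs <;> omega
    · by_cases hn3 : n = 3
      · subst hn3
        refine ⟨skA0, fun i => skA0 i + i, sk_build 3 (by norm_num) skA0 ?_ ?_⟩
        · intro i hi
          rw [Finset.mem_Icc] at hi
          simp only [skA0]
          split_ifs <;> omega
        · intro i hi j hj hij
          rw [Finset.mem_Icc] at hi hj
          simp only [skA0]
          split_ifs <;> omega
      · rcases h with h | h
        · obtain ⟨m, rfl⟩ : ∃ m, n = 4*m+2 := ⟨n/4, by omega⟩
          have hm : 1 ≤ m := by omega
          refine ⟨skA2 m, fun i => skA2 m i + i,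
            sk_build (4*m+2) (by omega) (skA2 m) ?_ ?_⟩
          · intro i hi
            rw [Finset.mem_Icc] at hi
            have := skA2_char m i (by omega) (by omega)
            omega
          · intro i hi j hj hij
            rw [Finset.mem_Icc] at hi hj
            have hci := skA2_char m i (by omega) (by omega)
            have hcj := skA2_char m j (by omega) (by omega)
            omega
        · obtain ⟨m, rfl⟩ : ∃ m, n = 4*m+3 := ⟨n/4, by omega⟩
          have hm : 1 ≤ m := by omega
          refine ⟨skA3 m, fun i => skA3 m i + i,
            sk_build (4*m+3) (by omega) (skA3 m) ?_ ?_⟩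
          · intro i hi
            rw [Finset.mem_Icc] at hi
            have := skA3_char m i (by omega) (by omega)
            omega
          · intro i hi j hj hij
            rw [Finset.mem_Icc] at hi hj
            have hci := skA3_char m i (by omega) (by omega)
            have hcj := skA3_char m j (by omega) (by omega)
            omega
end

section
/- Let k ≥ 0, n ≥ 3, t ∈ {0,1}, and suppose 3n ≡ t or 3−t (mod 4). Then there exist a partition of the set L = {1,…,r} ∪ {r+1+k, …, 3n+k−1} ∪ {3n+k+t} (for some positive integer r) into n triples D₁,…,Dₙ, a signing ε : L → {−1,1} such that for each i the signed sum Σ_{x∈Dᵢ} ε(x)·x = 0, and a choice of elements dᵢ ∈ Dᵢ together with signs δᵢ ∈ {−1,1} such that Σ_{i=1}^{n} δᵢ·ε(dᵢ)·dᵢ = 0. -/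
/- Per residue class Skolem pair constructions: `(· , · + d)` pairs. -/
def PA (m d : ℕ) : ℕ :=   -- n = 4m, m ≥ 2 : partitions [1, 8m-1] ∪ {8m}
  if d % 2 = 0 then 6*m - d/2
  else if d = 1 then m
  else if d = 2*m - 1 then 2*m
  else if d < 2*m then (4*m + 1 - d)/2
  else if d = 4*m - 1 then 2*m + 1
  else (4*m - 1 - d)/2

def PB (m d : ℕ) : ℕ :=   -- n = 4m+1, m ≥ 2 : partitions [1, 8m+2]
  if d % 2 = 0 then 6*m + 2 - d/2
  else if d = 1 then m + 1
  else if d = 2*m - 1 then 2*m + 2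
  else if d < 2*m then (4*m + 3 - d)/2
  else if d = 4*m + 1 then 2*m + 1
  else (4*m + 1 - d)/2

def PC (m d : ℕ) : ℕ :=   -- n = 4m+2, m ≥ 1 : partitions [1, 8m+3] ∪ {8m+5}
  if d = 4*m + 2 then 4*m + 3
  else if d % 2 = 0 then 2*m + 1 - d/2
  else if d = 4*m + 1 then 2*m + 1
  else if d = 2*m + 1 then 4*m + 2
  else if d = 1 then 7*m + 3
  else if d < 2*m + 1 then (12*m + 5 - d)/2
  else (12*m + 7 - d)/2

def PD (m d : ℕ) : ℕ :=   -- n = 4m+3, m ≥ 1 : partitions [1, 8m+5] ∪ {8m+7}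
  if d = 4*m + 3 then 4*m + 4
  else if d % 2 = 0 then 2*m + 2 - d/2
  else if d = 4*m + 1 then 2*m + 2
  else if d = 2*m + 1 then 6*m + 4
  else if d = 1 then 7*m + 4
  else if d < 2*m + 1 then (12*m + 7 - d)/2
  else (12*m + 9 - d)/2

def PP (n d : ℕ) : ℕ :=
  if n = 3 then (if d = 1 then 1 else if d = 2 then 3 else 4)
  else if n = 4 then (if d = 1 then 7 else if d = 2 then 2 else if d = 3 then 3 else 1)
  else if n = 5 then
    (if d = 1 then 8 else if d = 2 then 1 else if d = 3 then 4 else if d = 4 then 2 else 5)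
  else if n % 4 = 0 then PA (n/4) d
  else if n % 4 = 1 then PB (n/4) d
  else if n % 4 = 2 then PC (n/4) d
  else PD (n/4) d

lemma PA_bounds (m d : ℕ) (hm : 2 ≤ m) (h1 : 1 ≤ d) (h2 : d ≤ 4*m) :
    1 ≤ PA m d ∧ PA m d ≤ 8*m - 1 ∧ (PA m d + d ≤ 8*m - 1 ∨ PA m d + d = 8*m) := by
  unfold PA; split_ifs <;> omega

lemma PB_bounds (m d : ℕ) (hm : 2 ≤ m) (h1 : 1 ≤ d) (h2 : d ≤ 4*m+1) :
    1 ≤ PB m d ∧ PB m d ≤ 8*m + 1 ∧ (PB m d + d ≤ 8*m + 1 ∨ PB m d + d = 8*m + 2) := by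
  unfold PB; split_ifs <;> omega

lemma PC_bounds (m d : ℕ) (hm : 1 ≤ m) (h1 : 1 ≤ d) (h2 : d ≤ 4*m+2) :
    1 ≤ PC m d ∧ PC m d ≤ 8*m + 3 ∧ (PC m d + d ≤ 8*m + 3 ∨ PC m d + d = 8*m + 5) := by
  unfold PC; split_ifs <;> omega

lemma PD_bounds (m d : ℕ) (hm : 1 ≤ m) (h1 : 1 ≤ d) (h2 : d ≤ 4*m+3) :
    1 ≤ PD m d ∧ PD m d ≤ 8*m + 5 ∧ (PD m d + d ≤ 8*m + 5 ∨ PD m d + d = 8*m + 7) := by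
  unfold PD; split_ifs <;> omega

set_option maxHeartbeats 2000000 in
lemma PA_ne (m d e : ℕ) (hm : 2 ≤ m) (hd1 : 1 ≤ d) (hd2 : d ≤ 4*m) (he1 : 1 ≤ e)
    (he2 : e ≤ 4*m) (hde : d ≠ e) :
    PA m d ≠ PA m e ∧ PA m d ≠ PA m e + e ∧ PA m d + d ≠ PA m e + e := by
  unfold PA; split_ifs <;> omega

set_option maxHeartbeats 2000000 in
lemma PB_ne (m d e : ℕ) (hm : 2 ≤ m) (hd1 : 1 ≤ d) (hd2 : d ≤ 4*m+1) (he1 : 1 ≤ e)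
    (he2 : e ≤ 4*m+1) (hde : d ≠ e) :
    PB m d ≠ PB m e ∧ PB m d ≠ PB m e + e ∧ PB m d + d ≠ PB m e + e := by
  unfold PB; split_ifs <;> omega

set_option maxHeartbeats 2000000 in
lemma PC_ne (m d e : ℕ) (hm : 1 ≤ m) (hd1 : 1 ≤ d) (hd2 : d ≤ 4*m+2) (he1 : 1 ≤ e)
    (he2 : e ≤ 4*m+2) (hde : d ≠ e) :
    PC m d ≠ PC m e ∧ PC m d ≠ PC m e + e ∧ PC m d + d ≠ PC m e + e := by
  unfold PC; split_ifs <;> omega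

set_option maxHeartbeats 2000000 in
lemma PD_ne (m d e : ℕ) (hm : 1 ≤ m) (hd1 : 1 ≤ d) (hd2 : d ≤ 4*m+3) (he1 : 1 ≤ e)
    (he2 : e ≤ 4*m+3) (hde : d ≠ e) :
    PD m d ≠ PD m e ∧ PD m d ≠ PD m e + e ∧ PD m d + d ≠ PD m e + e := by
  unfold PD; split_ifs <;> omega

lemma PP_eq (n d : ℕ) (h3 : n ≠ 3) (h4 : n ≠ 4) (h5 : n ≠ 5) :
    PP n d = if n % 4 = 0 then PA (n/4) d else if n % 4 = 1 then PB (n/4) d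
      else if n % 4 = 2 then PC (n/4) d else PD (n/4) d := by
  simp [PP, h3, h4, h5]

lemma PP_bounds (n d : ℕ) (hn : 3 ≤ n) (h1 : 1 ≤ d) (h2 : d ≤ n) :
    1 ≤ PP n d ∧ PP n d ≤ 2*n - 1 ∧
      (PP n d + d ≤ 2*n - 1 ∨ (n % 4 ≤ 1 ∧ PP n d + d = 2*n) ∨
        (2 ≤ n % 4 ∧ PP n d + d = 2*n + 1)) := by
  by_cases e3 : n = 3
  · subst e3; interval_cases d <;> simp [PP] <;> omega
  by_cases e4 : n = 4
  · subst e4; interval_cases d <;> simp [PP] <;> omega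
  by_cases e5 : n = 5
  · subst e5; interval_cases d <;> simp [PP] <;> omega
  rw [PP_eq n d e3 e4 e5]
  rcases (show n % 4 = 0 ∨ n % 4 = 1 ∨ n % 4 = 2 ∨ n % 4 = 3 by omega) with hc|hc|hc|hc
  · rw [if_pos hc]
    have := PA_bounds (n/4) d (by omega) h1 (by omega); omega
  · rw [if_neg (by omega), if_pos hc]
    have := PB_bounds (n/4) d (by omega) h1 (by omega); omega
  · rw [if_neg (by omega), if_neg (by omega), if_pos hc]
    have := PC_bounds (n/4) d (by omega) h1 (by omega); omega
  · rw [if_neg (by omega), if_neg (by omega), if_neg (by omega)]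
    have := PD_bounds (n/4) d (by omega) h1 (by omega); omega

lemma PP_ne (n d e : ℕ) (hn : 3 ≤ n) (hd1 : 1 ≤ d) (hd2 : d ≤ n) (he1 : 1 ≤ e)
    (he2 : e ≤ n) (hde : d ≠ e) :
    PP n d ≠ PP n e ∧ PP n d ≠ PP n e + e ∧ PP n d + d ≠ PP n e + e := by
  by_cases e3 : n = 3
  · subst e3; interval_cases d <;> interval_cases e <;> simp [PP] <;> omega
  by_cases e4 : n = 4
  · subst e4; interval_cases d <;> interval_cases e <;> simp [PP] <;> omega
  by_cases e5 : n = 5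
  · subst e5; interval_cases d <;> interval_cases e <;> simp [PP] <;> omega
  rw [PP_eq n d e3 e4 e5, PP_eq n e e3 e4 e5]
  rcases (show n % 4 = 0 ∨ n % 4 = 1 ∨ n % 4 = 2 ∨ n % 4 = 3 by omega) with hc|hc|hc|hc
  · rw [if_pos hc, if_pos hc]
    exact PA_ne (n/4) d e (by omega) hd1 (by omega) he1 (by omega) hde
  · rw [if_neg (by omega), if_pos hc, if_neg (by omega), if_pos hc]
    exact PB_ne (n/4) d e (by omega) hd1 (by omega) he1 (by omega) hde
  · rw [if_neg (by omega), if_neg (by omega), if_pos hc, if_neg (by omega),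
      if_neg (by omega), if_pos hc]
    exact PC_ne (n/4) d e (by omega) hd1 (by omega) he1 (by omega) hde
  · rw [if_neg (by omega), if_neg (by omega), if_neg (by omega), if_neg (by omega),
      if_neg (by omega), if_neg (by omega)]
    exact PD_ne (n/4) d e (by omega) hd1 (by omega) he1 (by omega) hde

/-- `PP n 2 = PP n 4 + 1` in the classes where we pick top elements from triples 2 and 4. -/
lemma PP24 (n : ℕ) (h : (n % 4 = 1 ∧ 9 ≤ n) ∨ (n % 4 = 2 ∧ 6 ≤ n)) :
    PP n 2 = PP n 4 + 1 := by
  rcases h with ⟨h0, h9⟩ | ⟨h0, h6⟩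
  · rw [PP_eq n 2 (by omega) (by omega) (by omega), PP_eq n 4 (by omega) (by omega) (by omega),
      if_neg (by omega), if_pos h0, if_neg (by omega), if_pos h0]
    have hm : 2 ≤ n / 4 := by omega
    unfold PB; split_ifs <;> omega
  · rw [PP_eq n 2 (by omega) (by omega) (by omega), PP_eq n 4 (by omega) (by omega) (by omega),
      if_neg (by omega), if_neg (by omega), if_pos h0, if_neg (by omega), if_neg (by omega),
      if_pos h0]
    have hm : 1 ≤ n / 4 := by omega
    unfold PC; split_ifs <;> omega

/- The set of "large ends" of pairs, the sign function and the distinguished choice. -/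

def QimgF (n k : ℕ) : Finset ℕ := (Finset.Icc 1 n).image fun d => PP n d + d + n + k

def epsF (n k : ℕ) : ℕ → ℤ := fun x => if x ∈ QimgF n k then -1 else 1

def dselF (n k d : ℕ) : ℕ :=
  if (n % 4 = 1 ∨ n % 4 = 2) ∧ (d = 2 ∨ d = 4) then PP n d + n + k else d

def sgn (n d : ℕ) : ℤ :=
  if n = 5 then (if d = 2 ∨ d = 5 then -1 else 1)
  else if n % 4 = 0 then (if d % 4 = 1 ∨ d % 4 = 0 then 1 else -1)
  else if n % 4 = 3 then
    (if d = 3 then -1 else if d ≤ 2 then 1 else if d % 4 = 3 ∨ d % 4 = 0 then 1 else -1)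
  else if n % 4 = 1 then
    (if d ≤ 3 then 1 else if d ≤ 5 then -1 else if d % 4 = 1 ∨ d % 4 = 2 then 1 else -1)
  else
    (if d = 1 ∨ d = 2 ∨ d = 6 then 1
     else if d ≤ 5 then -1 else if d % 4 = 3 ∨ d % 4 = 2 then 1 else -1)

lemma sgn_pm (n d : ℕ) : sgn n d = 1 ∨ sgn n d = -1 := by
  unfold sgn; split_ifs <;> simp

lemma eps_pm (n k x : ℕ) : epsF n k x = 1 ∨ epsF n k x = -1 := by
  unfold epsF; split_ifs <;> simp

lemma eps_small (n k x : ℕ) (hn : 3 ≤ n) (h : x ≤ n) : epsF n k x = 1 := by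
  have hx : x ∉ QimgF n k := by
    unfold QimgF
    simp only [Finset.mem_image, Finset.mem_Icc, not_exists]
    rintro e ⟨⟨he1, he2⟩, heq⟩
    have := PP_bounds n e hn he1 he2
    omega
  simp [epsF, hx]

lemma eps_P (n k d : ℕ) (hn : 3 ≤ n) (h1 : 1 ≤ d) (h2 : d ≤ n) :
    epsF n k (PP n d + n + k) = 1 := by
  have hx : PP n d + n + k ∉ QimgF n k := by
    unfold QimgF
    simp only [Finset.mem_image, Finset.mem_Icc, not_exists]
    rintro e ⟨⟨he1, he2⟩, heq⟩
    by_cases hed : e = d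
    · subst hed; omega
    · have := (PP_ne n d e hn h1 h2 he1 he2 (fun h => hed h.symm)).2.1; omega
  simp [epsF, hx]

lemma eps_Q (n k d : ℕ) (h1 : 1 ≤ d) (h2 : d ≤ n) :
    epsF n k (PP n d + d + n + k) = -1 := by
  have hx : PP n d + d + n + k ∈ QimgF n k :=
    Finset.mem_image.2 ⟨d, Finset.mem_Icc.2 ⟨h1, h2⟩, rfl⟩
  simp [epsF, hx]

/- Summation machinery. -/

lemma quad_zero (F : ℕ → ℤ) (h : ∀ j, F (4*j) + F (4*j+1) + F (4*j+2) + F (4*j+3) = 0) :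
    ∀ M, ∑ i ∈ Finset.range (4*M), F i = 0 := by
  intro M
  induction M with
  | zero => simp
  | succ m ih =>
    have e : 4*(m+1) = 4*m + 4 := by ring
    rw [e, Finset.sum_range_add, ih, zero_add]
    simp only [Finset.sum_range_succ, Finset.sum_range_zero, zero_add, Nat.add_zero]
    linarith [h m]

/- Per-class term evaluation. -/

lemma term0 (n k x : ℕ) (h0 : n % 4 = 0) :
    sgn n x * (dselF n k x : ℤ) = if x % 4 = 1 ∨ x % 4 = 0 then (x:ℤ) else -(x:ℤ) := by
  unfold sgn dselF; split_ifs <;> push_cast <;> omega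

lemma term3 (n k x : ℕ) (h0 : n % 4 = 3) (h4 : 4 ≤ x) :
    sgn n x * (dselF n k x : ℤ) = if x % 4 = 3 ∨ x % 4 = 0 then (x:ℤ) else -(x:ℤ) := by
  unfold sgn dselF; split_ifs <;> push_cast <;> omega

lemma term1 (n k x : ℕ) (h0 : n % 4 = 1) (h5 : n ≠ 5) (h6 : 6 ≤ x) :
    sgn n x * (dselF n k x : ℤ) = if x % 4 = 1 ∨ x % 4 = 2 then (x:ℤ) else -(x:ℤ) := by
  unfold sgn dselF; split_ifs <;> push_cast <;> omega

lemma term2 (n k x : ℕ) (h0 : n % 4 = 2) (h7 : 7 ≤ x) :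
    sgn n x * (dselF n k x : ℤ) = if x % 4 = 3 ∨ x % 4 = 2 then (x:ℤ) else -(x:ℤ) := by
  unfold sgn dselF; split_ifs <;> push_cast <;> omega

lemma sel_sum (n k : ℕ) (hn : 3 ≤ n) :
    ∑ j ∈ Finset.range n, sgn n (j+1) * (dselF n k (j+1) : ℤ) = 0 := by
  by_cases e5 : n = 5
  · subst e5
    simp only [Finset.sum_range_succ, Finset.sum_range_zero, zero_add]
    norm_num [sgn, dselF, PP]
    push_cast; ring
  rcases (show n % 4 = 0 ∨ n % 4 = 1 ∨ n % 4 = 2 ∨ n % 4 = 3 by omega) with hc|hc|hc|hc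
  · -- n ≡ 0 (mod 4)
    obtain ⟨M, rfl⟩ : ∃ M, n = 4*M := ⟨n/4, by omega⟩
    refine quad_zero (fun i => sgn (4*M) (i+1) * (dselF (4*M) k (i+1) : ℤ)) (fun j => ?_) M
    show sgn (4*M) (4*j+1) * (dselF (4*M) k (4*j+1) : ℤ)
        + sgn (4*M) (4*j+2) * (dselF (4*M) k (4*j+2) : ℤ)
        + sgn (4*M) (4*j+3) * (dselF (4*M) k (4*j+3) : ℤ)
        + sgn (4*M) (4*j+4) * (dselF (4*M) k (4*j+4) : ℤ) = 0
    rw [term0 (4*M) k (4*j+1) hc, term0 (4*M) k (4*j+2) hc, term0 (4*M) k (4*j+3) hc,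
      term0 (4*M) k (4*j+4) hc]
    split_ifs <;> push_cast <;> omega
  · -- n ≡ 1 (mod 4), n ≠ 5, so n ≥ 9
    obtain ⟨M, rfl⟩ : ∃ M, n = 5 + 4*M := ⟨(n-5)/4, by omega⟩
    have hM : 1 ≤ M := by omega
    have h0 : (5 + 4*M) % 4 = 1 := by omega
    have h5 : ¬(5 + 4*M = 5) := by omega
    rw [Finset.sum_range_add]
    have hhead : ∑ j ∈ Finset.range 5, sgn (5+4*M) (j+1) * (dselF (5+4*M) k (j+1) : ℤ) = 0 := by
      have hPP : PP (5+4*M) 2 = PP (5+4*M) 4 + 1 := PP24 _ (Or.inl ⟨h0, by omega⟩)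
      simp only [Finset.sum_range_succ, Finset.sum_range_zero, zero_add]
      norm_num [sgn, dselF, h0, h5]
      push_cast
      omega
    have htail : ∑ i ∈ Finset.range (4*M),
        sgn (5+4*M) (5+i+1) * (dselF (5+4*M) k (5+i+1) : ℤ) = 0 := by
      refine quad_zero (fun i => sgn (5+4*M) (5+i+1) * (dselF (5+4*M) k (5+i+1) : ℤ))
        (fun j => ?_) M
      show sgn (5+4*M) (5+4*j+1) * (dselF (5+4*M) k (5+4*j+1) : ℤ)
          + sgn (5+4*M) (5+4*j+2) * (dselF (5+4*M) k (5+4*j+2) : ℤ)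
          + sgn (5+4*M) (5+4*j+3) * (dselF (5+4*M) k (5+4*j+3) : ℤ)
          + sgn (5+4*M) (5+4*j+4) * (dselF (5+4*M) k (5+4*j+4) : ℤ) = 0
      rw [term1 (5+4*M) k (5+4*j+1) h0 h5 (by omega), term1 (5+4*M) k (5+4*j+2) h0 h5 (by omega),
        term1 (5+4*M) k (5+4*j+3) h0 h5 (by omega), term1 (5+4*M) k (5+4*j+4) h0 h5 (by omega)]
      split_ifs <;> push_cast <;> omega
    rw [hhead, zero_add]
    exact htail
  · -- n ≡ 2 (mod 4), n ≥ 6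
    obtain ⟨M, rfl⟩ : ∃ M, n = 6 + 4*M := ⟨(n-6)/4, by omega⟩
    have h0 : (6 + 4*M) % 4 = 2 := by omega
    have h5 : ¬(6 + 4*M = 5) := by omega
    rw [Finset.sum_range_add]
    have hhead : ∑ j ∈ Finset.range 6, sgn (6+4*M) (j+1) * (dselF (6+4*M) k (j+1) : ℤ) = 0 := by
      have hPP : PP (6+4*M) 2 = PP (6+4*M) 4 + 1 := PP24 _ (Or.inr ⟨h0, by omega⟩)
      simp only [Finset.sum_range_succ, Finset.sum_range_zero, zero_add]
      norm_num [sgn, dselF, h0, h5]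
      push_cast
      omega
    have htail : ∑ i ∈ Finset.range (4*M),
        sgn (6+4*M) (6+i+1) * (dselF (6+4*M) k (6+i+1) : ℤ) = 0 := by
      refine quad_zero (fun i => sgn (6+4*M) (6+i+1) * (dselF (6+4*M) k (6+i+1) : ℤ))
        (fun j => ?_) M
      show sgn (6+4*M) (6+4*j+1) * (dselF (6+4*M) k (6+4*j+1) : ℤ)
          + sgn (6+4*M) (6+4*j+2) * (dselF (6+4*M) k (6+4*j+2) : ℤ)
          + sgn (6+4*M) (6+4*j+3) * (dselF (6+4*M) k (6+4*j+3) : ℤ)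
          + sgn (6+4*M) (6+4*j+4) * (dselF (6+4*M) k (6+4*j+4) : ℤ) = 0
      rw [term2 (6+4*M) k (6+4*j+1) h0 (by omega), term2 (6+4*M) k (6+4*j+2) h0 (by omega),
        term2 (6+4*M) k (6+4*j+3) h0 (by omega), term2 (6+4*M) k (6+4*j+4) h0 (by omega)]
      split_ifs <;> push_cast <;> omega
    rw [hhead, zero_add]
    exact htail
  · -- n ≡ 3 (mod 4)
    obtain ⟨M, rfl⟩ : ∃ M, n = 3 + 4*M := ⟨(n-3)/4, by omega⟩
    have h0 : (3 + 4*M) % 4 = 3 := by omega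
    have h5 : ¬(3 + 4*M = 5) := by omega
    rw [Finset.sum_range_add]
    have hhead : ∑ j ∈ Finset.range 3, sgn (3+4*M) (j+1) * (dselF (3+4*M) k (j+1) : ℤ) = 0 := by
      simp only [Finset.sum_range_succ, Finset.sum_range_zero, zero_add]
      norm_num [sgn, dselF, h0, h5]
    have htail : ∑ i ∈ Finset.range (4*M),
        sgn (3+4*M) (3+i+1) * (dselF (3+4*M) k (3+i+1) : ℤ) = 0 := by
      refine quad_zero (fun i => sgn (3+4*M) (3+i+1) * (dselF (3+4*M) k (3+i+1) : ℤ))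
        (fun j => ?_) M
      show sgn (3+4*M) (3+4*j+1) * (dselF (3+4*M) k (3+4*j+1) : ℤ)
          + sgn (3+4*M) (3+4*j+2) * (dselF (3+4*M) k (3+4*j+2) : ℤ)
          + sgn (3+4*M) (3+4*j+3) * (dselF (3+4*M) k (3+4*j+3) : ℤ)
          + sgn (3+4*M) (3+4*j+4) * (dselF (3+4*M) k (3+4*j+4) : ℤ) = 0
      rw [term3 (3+4*M) k (3+4*j+1) h0 (by omega), term3 (3+4*M) k (3+4*j+2) h0 (by omega),
        term3 (3+4*M) k (3+4*j+3) h0 (by omega), term3 (3+4*M) k (3+4*j+4) h0 (by omega)]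
      split_ifs <;> push_cast <;> omega
    rw [hhead, zero_add]
    exact htail

theorem stmt_8 (k n t : ℕ) (hn : 3 ≤ n) (ht : t = 0 ∨ t = 1)
    (hmod : 3 * n % 4 = t % 4 ∨ 3 * n % 4 = (3 - t) % 4) :
    ∃ (r : ℕ) (D : Fin n → Finset ℕ) (ε : ℕ → ℤ) (d : Fin n → ℕ) (δ : Fin n → ℤ),
      0 < r ∧
      (∀ i, (D i).card = 3) ∧
      (∀ i j, i ≠ j → Disjoint (D i) (D j)) ∧
      Finset.univ.biUnion D =
        Finset.Icc 1 r ∪ Finset.Icc (r + 1 + k) (3 * n + k - 1) ∪ {3 * n + k + t} ∧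
      (∀ x, ε x = 1 ∨ ε x = -1) ∧
      (∀ i, ∑ x ∈ D i, ε x * (x : ℤ) = 0) ∧
      (∀ i, d i ∈ D i) ∧
      (∀ i, δ i = 1 ∨ δ i = -1) ∧
      ∑ i, δ i * ε (d i) * (d i : ℤ) = 0 := by
  have ht01 : (t = 0 ∧ n % 4 ≤ 1) ∨ (t = 1 ∧ 2 ≤ n % 4) := by omega
  set D : Fin n → Finset ℕ :=
    fun i => {(i:ℕ)+1, PP n ((i:ℕ)+1) + n + k, PP n ((i:ℕ)+1) + ((i:ℕ)+1) + n + k} with hD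
  have hcard : ∀ i, (D i).card = 3 := by
    intro i
    have hi : (i:ℕ) < n := i.isLt
    have hb := PP_bounds n ((i:ℕ)+1) hn (by omega) (by omega)
    rw [hD]
    rw [Finset.card_insert_of_notMem
        (by simp only [Finset.mem_insert, Finset.mem_singleton]; omega),
      Finset.card_insert_of_notMem (by simp only [Finset.mem_singleton]; omega),
      Finset.card_singleton]
  have hdisj : ∀ i j, i ≠ j → Disjoint (D i) (D j) := by
    intro i j hij
    have hi : (i:ℕ) < n := i.isLt
    have hj : (j:ℕ) < n := j.isLt
    have hij' : (i:ℕ) ≠ (j:ℕ) := fun h => hij (Fin.ext h)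
    have hbi := PP_bounds n ((i:ℕ)+1) hn (by omega) (by omega)
    have hbj := PP_bounds n ((j:ℕ)+1) hn (by omega) (by omega)
    have h1 := PP_ne n ((i:ℕ)+1) ((j:ℕ)+1) hn (by omega) (by omega) (by omega) (by omega)
      (by omega)
    have h2 := PP_ne n ((j:ℕ)+1) ((i:ℕ)+1) hn (by omega) (by omega) (by omega) (by omega)
      (by omega)
    rw [Finset.disjoint_left]
    intro a ha hb
    rw [hD] at ha hb
    simp only [Finset.mem_insert, Finset.mem_singleton] at ha hb
    omega
  have hunion : Finset.univ.biUnion D =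
      Finset.Icc 1 n ∪ Finset.Icc (n + 1 + k) (3 * n + k - 1) ∪ {3 * n + k + t} := by
    have hsub : Finset.univ.biUnion D ⊆
        Finset.Icc 1 n ∪ Finset.Icc (n + 1 + k) (3 * n + k - 1) ∪ {3 * n + k + t} := by
      intro x hx
      simp only [Finset.mem_biUnion, hD, Finset.mem_insert, Finset.mem_singleton] at hx
      obtain ⟨i, -, hx⟩ := hx
      have hi : (i:ℕ) < n := i.isLt
      have hb := PP_bounds n ((i:ℕ)+1) hn (by omega) (by omega)
      simp only [Finset.mem_union, Finset.mem_Icc, Finset.mem_singleton]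
      omega
    have hcardS : (Finset.Icc 1 n ∪ Finset.Icc (n + 1 + k) (3 * n + k - 1)
        ∪ {3 * n + k + t}).card = 3 * n := by
      rw [Finset.card_union_of_disjoint (by
          rw [Finset.disjoint_left]; intro a ha hb
          simp only [Finset.mem_union, Finset.mem_Icc, Finset.mem_singleton] at ha hb
          omega),
        Finset.card_union_of_disjoint (by
          rw [Finset.disjoint_left]; intro a ha hb
          simp only [Finset.mem_Icc] at ha hb
          omega),
        Nat.card_Icc, Nat.card_Icc, Finset.card_singleton]
      omega
    have hcardB : (Finset.univ.biUnion D).card = 3 * n := by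
      rw [Finset.card_biUnion (fun i _ j _ hij => hdisj i j hij)]
      simp [hcard, Finset.sum_const, Finset.card_univ, mul_comm]
    refine Finset.eq_of_subset_of_card_le hsub ?_
    rw [hcardS, hcardB]
  refine ⟨n, D, epsF n k, fun i => dselF n k ((i:ℕ)+1),
    fun i => sgn n ((i:ℕ)+1) * epsF n k (dselF n k ((i:ℕ)+1)),
    by omega, hcard, hdisj, hunion, eps_pm n k, ?_, ?_, ?_, ?_⟩
  · -- triple sums
    intro i
    have hi : (i:ℕ) < n := i.isLt
    have hb := PP_bounds n ((i:ℕ)+1) hn (by omega) (by omega)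
    rw [hD]
    rw [Finset.sum_insert (by simp only [Finset.mem_insert, Finset.mem_singleton]; omega),
      Finset.sum_insert (by simp only [Finset.mem_singleton]; omega),
      Finset.sum_singleton]
    rw [eps_small n k ((i:ℕ)+1) hn (by omega), eps_P n k ((i:ℕ)+1) hn (by omega) (by omega),
      eps_Q n k ((i:ℕ)+1) (by omega) (by omega)]
    push_cast
    ring
  · -- distinguished elements belong to triples
    intro i
    by_cases h : (n % 4 = 1 ∨ n % 4 = 2) ∧ ((i:ℕ)+1 = 2 ∨ (i:ℕ)+1 = 4)
    · simp only [dselF, if_pos h, hD, Finset.mem_insert, Finset.mem_singleton]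
      tauto
    · simp only [dselF, if_neg h, hD, Finset.mem_insert, Finset.mem_singleton]
      tauto
  · -- δ values are ±1
    intro i
    rcases sgn_pm n ((i:ℕ)+1) with h1|h1 <;>
      rcases eps_pm n k (dselF n k ((i:ℕ)+1)) with h2|h2 <;>
        simp [h1, h2]
  · -- the zero-sum of distinguished elements
    have hterm : ∀ i : Fin n,
        (sgn n ((i:ℕ)+1) * epsF n k (dselF n k ((i:ℕ)+1))) * epsF n k (dselF n k ((i:ℕ)+1))
          * (dselF n k ((i:ℕ)+1) : ℤ) = sgn n ((i:ℕ)+1) * (dselF n k ((i:ℕ)+1) : ℤ) := by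
      intro i
      rcases eps_pm n k (dselF n k ((i:ℕ)+1)) with h|h <;> rw [h] <;> ring
    rw [Finset.sum_congr rfl (fun i _ => hterm i)]
    rw [Fin.sum_univ_eq_sum_range (fun j => sgn n (j+1) * (dselF n k (j+1) : ℤ)) n]
    exact sel_sum n k hn
end

section
/- Let G be a finite simple connected Eulerian graph (every vertex has even degree) with M edges, where M ≡ 1 or 2 (mod 4). Then G is not graceful: there is no injection f : V(G) → {0,1,…,M} such that the map sending each edge uv to |f(u) − f(v)| is a bijection from E(G) to {1,…,M}. -/
open Finset

lemma gauss_icc_aux (M : ℕ) : (∑ i ∈ Finset.Icc 1 M, i) * 2 = M * (M + 1) := by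
  induction M with
  | zero => simp
  | succ n ih =>
    rw [Finset.sum_Icc_succ_top (by omega : (1:ℕ) ≤ n + 1), add_mul, ih]
    ring

theorem stmt_14 {V : Type*} [Fintype V] [DecidableEq V]
    (G : SimpleGraph V) [DecidableRel G.Adj]
    (hconn : G.Connected) (heul : ∀ v, Even (G.degree v))
    (M : ℕ) (hM : M = G.edgeFinset.card) (hmod : M % 4 = 1 ∨ M % 4 = 2) :
    ¬ ∃ f : V → ℕ, Function.Injective f ∧ (∀ v, f v ≤ M) ∧
      G.edgeFinset.image
        (Sym2.lift ⟨fun u v => ((f u : ℤ) - (f v : ℤ)).natAbs,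
          fun u v => by dsimp only; omega⟩) = Finset.Icc 1 M := by
  rintro ⟨f, hinj, hle, himg⟩
  set g : Sym2 V → ℕ := Sym2.lift ⟨fun u v => ((f u : ℤ) - (f v : ℤ)).natAbs,
    fun u v => by dsimp only; omega⟩ with hg
  -- the labeling is injective on edges
  have hcard : (G.edgeFinset.image g).card = G.edgeFinset.card := by
    rw [himg, Nat.card_Icc, hM]; omega
  have hinjOn : Set.InjOn g G.edgeFinset := Finset.injOn_of_card_image_eq hcard
  -- sum of labels = 1 + 2 + ... + M
  have hsum : ∑ e ∈ G.edgeFinset, g e = ∑ i ∈ Finset.Icc 1 M, i := by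
    rw [← himg, Finset.sum_image (fun a ha b hb => hinjOn ha hb)]
  -- Gauss: the sum 1 + ... + M is odd
  have hodd : (∑ i ∈ Finset.Icc 1 M, i) % 2 = 1 := by
    have h3 := gauss_icc_aux M
    have h4 : (M * (M + 1)) % 4 = 2 := by
      rw [Nat.mul_mod]
      rcases hmod with h | h
      · rw [h, show (M + 1) % 4 = 2 by omega]
      · rw [h, show (M + 1) % 4 = 3 by omega]
    omega
  -- parity: the sum of labels is even (dart double counting)
  -- sum over darts of f ∘ fst equals ∑ v, degree v * f v (even)
  have hdartsum : ∑ d : G.Dart, f d.fst = ∑ v, G.degree v * f v := by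
    rw [← Finset.sum_fiberwise (g := fun d : G.Dart => d.fst) (f := fun d => f d.fst)]
    refine Finset.sum_congr rfl fun v _ => ?_
    rw [Finset.sum_congr rfl (fun d hd => ?_), Finset.sum_const, smul_eq_mul,
      G.dart_fst_fiber_card_eq_degree v]
    simp only [Finset.mem_filter] at hd
    exact congrArg f hd.2
  have heven : (∑ d : G.Dart, f d.fst) % 2 = 0 := by
    rw [hdartsum, Finset.sum_nat_mod]
    have : ∀ v ∈ (Finset.univ : Finset V), G.degree v * f v % 2 = 0 := fun v _ => by
      obtain ⟨k, hk⟩ := heul v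
      rw [hk, ← two_mul, mul_assoc]
      simp [Nat.mul_mod_right]
    rw [Finset.sum_congr rfl this]
    simp
  -- sum over darts also equals, mod 2, the sum of labels over edges
  have hdart2 : (∑ d : G.Dart, f d.fst) % 2 = (∑ e ∈ G.edgeFinset, g e) % 2 := by
    rw [← Finset.sum_fiberwise_of_maps_to (g := fun d : G.Dart => d.edge)
      (t := G.edgeFinset) (fun d _ => by rw [SimpleGraph.mem_edgeFinset]; exact d.edge_mem)
      (fun d => f d.fst)]
    rw [Finset.sum_nat_mod, Finset.sum_nat_mod (s := G.edgeFinset) (f := g)]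
    congr 1
    refine Finset.sum_congr rfl fun e he => ?_
    rw [SimpleGraph.mem_edgeFinset] at he
    induction' e with u v
    have hd : (Finset.univ.filter fun d : G.Dart => d.edge = s(u, v)) =
        {(⟨(u, v), he⟩ : G.Dart), (⟨(u, v), he⟩ : G.Dart).symm} := by
      ext d
      simp only [Finset.mem_filter, Finset.mem_univ, true_and, Finset.mem_insert,
        Finset.mem_singleton]
      exact SimpleGraph.dart_edge_eq_iff d ⟨(u, v), he⟩
    rw [hd]
    rw [Finset.sum_insert (by
      simp only [Finset.mem_singleton]
      exact (⟨(u, v), he⟩ : G.Dart).symm_ne.symm)]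
    rw [Finset.sum_singleton]
    have : g s(u, v) = ((f u : ℤ) - (f v : ℤ)).natAbs := rfl
    rw [this]
    show (f u + f v) % 2 = _
    omega
  rw [hsum] at hdart2
  omega
end
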